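/- Let 𝓡₁ denote ℝ² with basis e₁,e₂ and product e₁·e₁ = 2e₁, e₁·e₂ = e₂, e₂·e₁ = 0, e₂·e₂ = e₁, and let 𝓡₂ denote ℝ² with the same products except e₂·e₂ = −e₁. Then there is no ℝ-linear bijection f : ℝ² → ℝ² with f(x·y) = f(x)·′f(y) for all x,y (· the product of 𝓡₁, ·′ that of 𝓡₂); i.e. 𝓡₁ and 𝓡₂ are non-isomorphic real algebras. -/

import Mathlib

/-- `𝓡₁` (product `e₁·e₁ = 2e₁`, `e₁·e₂ = e₂`, `e₂·e₁ = 0`, `e₂·e₂ = e₁`) and `𝓡₂`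
(same, except `e₂·e₂ = −e₁`) are non-isomorphic real algebras. -/
theorem stmt8
    (mul₁ mul₂ : ℝ × ℝ → ℝ × ℝ → ℝ × ℝ)
    (hmul₁ : ∀ x y, mul₁ x y = (2 * (x.1 * y.1) + x.2 * y.2, x.1 * y.2))
    (hmul₂ : ∀ x y, mul₂ x y = (2 * (x.1 * y.1) - x.2 * y.2, x.1 * y.2)) :
    ¬ ∃ f : (ℝ × ℝ) ≃ₗ[ℝ] (ℝ × ℝ), ∀ x y, f (mul₁ x y) = mul₂ (f x) (f y) := by
  rintro ⟨f, hf⟩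
  set a := (f (1, 0)).1 with ha
  set b := (f (1, 0)).2 with hb
  set c := (f (0, 1)).1 with hc
  set d := (f (0, 1)).2 with hd
  have h1 := hf (1, 0) (1, 0)
  have h2 := hf (1, 0) (0, 1)
  have h3 := hf (0, 1) (1, 0)
  have h4 := hf (0, 1) (0, 1)
  rw [hmul₁, hmul₂] at h1 h2 h3 h4
  simp only at h1 h2 h3 h4
  norm_num at h1 h2 h3 h4
  -- h1 : f (2, 0) = (2*a^2 - b^2-ish, a*b); rewrite (2,0) = 2 • (1,0)
  have h20 : ((2 : ℝ), (0 : ℝ)) = (2 : ℝ) • ((1 : ℝ), (0 : ℝ)) := by norm_num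
  rw [h20, map_smul] at h1
  have e1 : (2 : ℝ) * a = 2 * (a * a) - b * b := by
    have := congrArg Prod.fst h1
    simpa [← ha, ← hb] using this
  have e2a : c = 2 * (a * c) - b * d := by
    have := congrArg Prod.fst h2
    simpa [← hc, ← hd, ← ha, ← hb] using this
  have e2b : d = a * d := by
    have := congrArg Prod.snd h2
    simpa [← hc, ← hd, ← ha, ← hb] using this
  have e3a : (0 : ℝ) = 2 * (c * a) - d * b := by
    have := congrArg Prod.fst h3
    simpa [← hc, ← hd, ← ha, ← hb, show f ((0:ℝ), (0:ℝ)) = 0 from map_zero f] using this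
  have e3b : (0 : ℝ) = c * b := by
    have := congrArg Prod.snd h3
    simpa [← hc, ← hd, ← ha, ← hb, show f ((0:ℝ), (0:ℝ)) = 0 from map_zero f] using this
  have e4a : a = 2 * (c * c) - d * d := by
    have := congrArg Prod.fst h4
    simpa [← hc, ← hd, ← ha, ← hb] using this
  have e4b : b = c * d := by
    have := congrArg Prod.snd h4
    simpa [← hc, ← hd, ← ha, ← hb] using this
  -- derive c = 0
  have hc0 : c = 0 := by nlinarith [e2a, e3a]
  have hb0 : b = 0 := by rw [e4b, hc0]; ring
  have hd0 : d = 0 := by nlinarith [e1, e4a, e4b, hc0, hb0, sq_nonneg d, sq_nonneg a]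
  -- then f (0,1) = 0
  have : f (0, 1) = 0 := by
    have : f (0, 1) = ((f (0, 1)).1, (f (0, 1)).2) := rfl
    rw [this, ← hc, ← hd, hd0, hc0]
    rfl
  have := f.injective (by rw [this, map_zero] : f (0, 1) = f 0)
  exact absurd (congrArg Prod.snd this) (by norm_num)
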